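/- Let $p$ be a prime, let $\sigma\in S_p$ be a $p$-cycle, and let $\tau$ be an element of the normalizer $N_{S_p}(\langle\sigma\rangle)$. Then exactly one of the following holds: $\tau$ is the identity; $\tau$ is a $p$-cycle; or there exists a divisor $d$ of $p-1$ with $d\ge 2$ such that $\tau$ has exactly one fixed point and its cycle decomposition consists of that fixed point together with $(p-1)/d$ cycles each of length $d$. -/

import Mathlib

open Equiv Equiv.Perm Finset

section Aux

variable {p : ℕ}

lemma aux_support_univ (hp : p.Prime) {σ : Equiv.Perm (Fin p)}
    (hσcard : σ.support.card = p) : σ.support = Finset.univ :=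
  Finset.eq_univ_of_card _ (by simp [hσcard])

-- σ^i x = σ^j x iff i ≡ j mod p
lemma aux_pow_apply_eq (hp : p.Prime) {σ : Equiv.Perm (Fin p)} (hσ : σ.IsCycle)
    (hσcard : σ.support.card = p) (x : Fin p) {i j : ℕ} :
    (σ ^ i) x = (σ ^ j) x ↔ (i : ZMod p) = (j : ZMod p) := by
  have horder : orderOf σ = p := by rw [hσ.orderOf, hσcard]
  have hmove : σ x ≠ x := by
    have := aux_support_univ hp hσcard
    rw [← Equiv.Perm.mem_support, this]; exact Finset.mem_univ x
  have hmod := pow_eq_pow_iff_modEq (x := σ) (n := i) (m := j)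
  rw [horder] at hmod
  rw [ZMod.natCast_eq_natCast_iff, ← hmod]
  constructor
  · intro h
    exact hσ.pow_eq_pow_iff.mpr ⟨x, hmove, h⟩
  · intro h; rw [h]

-- transitivity
lemma aux_exists_pow (hp : p.Prime) {σ : Equiv.Perm (Fin p)} (hσ : σ.IsCycle)
    (hσcard : σ.support.card = p) (x y : Fin p) : ∃ k : ℕ, (σ ^ k) x = y := by
  have hu := aux_support_univ hp hσcard
  have hx : σ x ≠ x := by rw [← Equiv.Perm.mem_support, hu]; exact Finset.mem_univ x
  have hy : σ y ≠ y := by rw [← Equiv.Perm.mem_support, hu]; exact Finset.mem_univ y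
  exact hσ.exists_pow_eq hx hy

-- commuting implies power of σ
lemma aux_commute (hp : p.Prime) {σ ρ : Equiv.Perm (Fin p)} (hσ : σ.IsCycle)
    (hσcard : σ.support.card = p) (hc : ρ * σ = σ * ρ) : ∃ c : ℕ, ρ = σ ^ c := by
  have hpos : 0 < p := hp.pos
  let x0 : Fin p := ⟨0, hpos⟩
  obtain ⟨c, hc0⟩ := aux_exists_pow hp hσ hσcard x0 (ρ x0)
  refine ⟨c, Equiv.ext fun x => ?_⟩
  obtain ⟨k, rfl⟩ := aux_exists_pow hp hσ hσcard x0 x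
  have hcomm : ρ * σ ^ k = σ ^ k * ρ := (Commute.pow_right hc k)
  calc ρ ((σ ^ k) x0) = (ρ * σ ^ k) x0 := rfl
    _ = (σ ^ k * ρ) x0 := by rw [hcomm]
    _ = (σ ^ k) (ρ x0) := rfl
    _ = (σ ^ k) ((σ ^ c) x0) := by rw [hc0]
    _ = (σ ^ c) ((σ ^ k) x0) := by
        rw [← Equiv.Perm.mul_apply, ← Equiv.Perm.mul_apply, ← pow_add, ← pow_add,
          Nat.add_comm]

-- key counting lemma
lemma aux_one_fixed (hp : p.Prime) {σ ρ : Equiv.Perm (Fin p)} (hσ : σ.IsCycle)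
    (hσcard : σ.support.card = p) {b : ℕ} (hconj : ρ * σ * ρ⁻¹ = σ ^ b)
    (hb : (b : ZMod p) ≠ 1) :
    (Finset.univ.filter fun x => ρ x = x).card = 1 := by
  haveI : Fact p.Prime := ⟨hp⟩
  have hpos : 0 < p := hp.pos
  let x0 : Fin p := ⟨0, hpos⟩
  obtain ⟨c, hc0⟩ := aux_exists_pow hp hσ hσcard x0 (ρ x0)
  -- ρ (σ^k x0) = σ^(b*k + c) x0
  have key : ∀ k : ℕ, ρ ((σ ^ k) x0) = (σ ^ (b * k + c)) x0 := by
    intro k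
    have h1 : ρ * σ ^ k * ρ⁻¹ = σ ^ (b * k) := by
      have : (ρ * σ * ρ⁻¹) ^ k = ρ * σ ^ k * ρ⁻¹ := by
        simp [conj_pow]
      rw [← this, hconj, ← pow_mul, Nat.mul_comm]
    have h2 : ρ * σ ^ k = σ ^ (b * k) * ρ := by
      rw [← h1]; group
    calc ρ ((σ ^ k) x0) = (ρ * σ ^ k) x0 := rfl
      _ = (σ ^ (b * k) * ρ) x0 := by rw [h2]
      _ = (σ ^ (b * k)) (ρ x0) := rfl
      _ = (σ ^ (b * k)) ((σ ^ c) x0) := by rw [hc0]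
      _ = (σ ^ (b * k + c)) x0 := by rw [← Equiv.Perm.mul_apply, ← pow_add]
  -- the unique fixed point
  have hbne : (1 : ZMod p) - (b : ZMod p) ≠ 0 := by
    intro h; apply hb; linear_combination -h
  set K : ZMod p := ((1 : ZMod p) - b)⁻¹ * c with hK
  have hKeq : (b : ZMod p) * K + c = K := by
    have h1 : (1 - (b : ZMod p)) * K = c := by
      rw [hK, ← mul_assoc, mul_inv_cancel₀ hbne, one_mul]
    linear_combination -h1
  rw [Finset.card_eq_one]
  refine ⟨(σ ^ K.val) x0, ?_⟩
  ext x
  simp only [Finset.mem_filter, Finset.mem_univ, true_and, Finset.mem_singleton]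
  obtain ⟨k, rfl⟩ := aux_exists_pow hp hσ hσcard x0 x
  rw [key k, aux_pow_apply_eq hp hσ hσcard, aux_pow_apply_eq hp hσ hσcard]
  push_cast
  rw [ZMod.natCast_val, ZMod.cast_id]
  constructor
  · intro h
    have : ((1 : ZMod p) - b) * k = c := by linear_combination -h
    rw [hK, ← this]
    field_simp
  · intro h; rw [h, hKeq]

end Aux


/-- Let `p` be a prime, `σ ∈ S_p` a `p`-cycle and `τ` an element of the normalizer
`N_{S_p}(⟨σ⟩)`. Then exactly one of the following holds: `τ` is the identity; `τ` is a
`p`-cycle; or there is a divisor `d ≥ 2` of `p - 1` such that `τ` has exactly one fixed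
point and its cycle decomposition consists of `(p-1)/d` cycles of length `d`. -/
theorem normalizer_element_trichotomy (p : ℕ) (hp : p.Prime)
    (σ τ : Equiv.Perm (Fin p)) (hσ : σ.IsCycle) (hσcard : σ.support.card = p)
    (hτ : τ ∈ Subgroup.normalizer (Subgroup.zpowers σ)) :
    (τ = 1 ∧
      ¬ (τ.IsCycle ∧ τ.support.card = p) ∧
      ¬ (∃ d : ℕ, d ∣ p - 1 ∧ 2 ≤ d ∧
          (Finset.univ.filter fun x => τ x = x).card = 1 ∧
          τ.cycleType = Multiset.replicate ((p - 1) / d) d)) ∨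
    (τ ≠ 1 ∧
      (τ.IsCycle ∧ τ.support.card = p) ∧
      ¬ (∃ d : ℕ, d ∣ p - 1 ∧ 2 ≤ d ∧
          (Finset.univ.filter fun x => τ x = x).card = 1 ∧
          τ.cycleType = Multiset.replicate ((p - 1) / d) d)) ∨
    (τ ≠ 1 ∧
      ¬ (τ.IsCycle ∧ τ.support.card = p) ∧
      (∃ d : ℕ, d ∣ p - 1 ∧ 2 ≤ d ∧
          (Finset.univ.filter fun x => τ x = x).card = 1 ∧
          τ.cycleType = Multiset.replicate ((p - 1) / d) d)) := by
  haveI : Fact p.Prime := ⟨hp⟩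
  haveI : Fact (1 < p) := ⟨hp.one_lt⟩
  have hpos : 0 < p := hp.pos
  have horder : orderOf σ = p := by rw [hσ.orderOf, hσcard]
  -- fixed point count + support count = p
  have hfix_card : ∀ ρ : Equiv.Perm (Fin p),
      (Finset.univ.filter fun x => ρ x = x).card + ρ.support.card = p := by
    intro ρ
    have h1 : ρ.support = Finset.univ.filter fun x => ¬ ρ x = x := by
      ext x; simp [Equiv.Perm.mem_support]
    rw [h1, Finset.card_filter_add_card_filter_not, Finset.card_univ,
      Fintype.card_fin]
  -- a helper to turn ZMod equalities into pow equalities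
  have hpow_eq : ∀ m m' : ℕ, (m : ZMod p) = (m' : ZMod p) → σ ^ m = σ ^ m' := by
    intro m m' h
    rw [pow_eq_pow_iff_modEq, horder, ← ZMod.natCast_eq_natCast_iff]
    exact h
  by_cases hτ1 : τ = 1
  · left
    subst hτ1
    refine ⟨rfl, ?_, ?_⟩
    · rintro ⟨h, -⟩
      exact h.ne_one rfl
    · rintro ⟨d, -, -, hfix, -⟩
      have hall : (Finset.univ.filter fun x => (1 : Equiv.Perm (Fin p)) x = x)
          = Finset.univ := by
        apply Finset.filter_true_of_mem
        intro x _
        rfl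
      rw [hall, Finset.card_univ, Fintype.card_fin] at hfix
      have := hp.one_lt
      omega
  -- τ ≠ 1
  have hmem : τ * σ * τ⁻¹ ∈ Subgroup.zpowers σ :=
    (Subgroup.mem_normalizer_iff.mp hτ σ).mp (Subgroup.mem_zpowers σ)
  obtain ⟨n, hn⟩ := hmem
  set a : ZMod p := (n : ZMod p) with ha_def
  have hconj : τ * σ * τ⁻¹ = σ ^ a.val := by
    have h2 : σ ^ (n : ℤ) = σ ^ ((a.val : ℕ) : ℤ) := by
      rw [zpow_eq_zpow_iff_modEq, horder, ← ZMod.intCast_eq_intCast_iff]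
      push_cast
      rw [ZMod.natCast_val, ZMod.cast_id]
    rw [← hn]
    show σ ^ (n : ℤ) = σ ^ a.val
    rw [h2, zpow_natCast]
  have hσne : σ ≠ 1 := by
    intro h
    rw [h] at hσcard
    simp at hσcard
    omega
  have ha0 : a ≠ 0 := by
    intro h
    rw [h, ZMod.val_zero, pow_zero] at hconj
    apply hσne
    have := hconj
    group at this
    simpa using this
  -- conjugation by powers
  have hconjk : ∀ k : ℕ, τ ^ k * σ * (τ ^ k)⁻¹ = σ ^ ((a ^ k).val) := by
    intro k
    induction k with
    | zero => simp [ZMod.val_one]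
    | succ k ih =>
      have h1 : τ ^ (k + 1) * σ * (τ ^ (k + 1))⁻¹
          = τ * (τ ^ k * σ * (τ ^ k)⁻¹) * τ⁻¹ := by group
      rw [h1, ih]
      have h2 : τ * σ ^ (a ^ k).val * τ⁻¹ = (τ * σ * τ⁻¹) ^ (a ^ k).val := by
        rw [conj_pow]
      rw [h2, hconj, ← pow_mul]
      apply hpow_eq
      push_cast
      rw [ZMod.natCast_val, ZMod.cast_id, ZMod.natCast_val, ZMod.cast_id,
        ZMod.natCast_val, ZMod.cast_id, pow_succ, mul_comm]
  by_cases ha1 : a = 1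
  · -- τ commutes with σ, hence is a power of σ, hence a p-cycle
    right; left
    have hcomm : τ * σ = σ * τ := by
      have : τ * σ * τ⁻¹ = σ := by rw [hconj, ha1, ZMod.val_one, pow_one]
      calc τ * σ = τ * σ * τ⁻¹ * τ := by group
        _ = σ * τ := by rw [this]
    obtain ⟨c, hc⟩ := aux_commute hp hσ hσcard hcomm
    have hcne : ¬ (p ∣ c) := by
      intro h
      apply hτ1
      rw [hc]
      exact orderOf_dvd_iff_pow_eq_one.mp (by rw [horder]; exact h)
    have hcop : c.Coprime (orderOf σ) := by
      rw [horder]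
      exact (Nat.coprime_comm.mp (hp.coprime_iff_not_dvd.mpr hcne))
    have hcyc : τ.IsCycle := by rw [hc]; exact hσ.pow_iff.mpr hcop
    have hsupp : τ.support.card = p := by
      rw [hc, Equiv.Perm.support_pow_coprime hcop, hσcard]
    refine ⟨hτ1, ⟨hcyc, hsupp⟩, ?_⟩
    rintro ⟨d, -, -, hfix, -⟩
    have := hfix_card τ
    omega
  · -- the affine case
    right; right
    set d : ℕ := orderOf a with hd_def
    have hapow : a ^ (p - 1) = 1 := ZMod.pow_card_sub_one_eq_one ha0
    have hd_dvd : d ∣ p - 1 := orderOf_dvd_of_pow_eq_one hapow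
    have hd_pos : 0 < d := by
      rcases Nat.eq_zero_or_pos d with h | h
      · rw [h] at hd_dvd
        have h2 := Nat.eq_zero_of_zero_dvd hd_dvd
        have := hp.two_le
        omega
      · exact h
    have hd1 : d ≠ 1 := by
      intro h
      exact ha1 (orderOf_eq_one_iff.mp h)
    have hd2 : 2 ≤ d := by omega
    have haval1 : ((a.val : ℕ) : ZMod p) ≠ 1 := by
      rw [ZMod.natCast_val, ZMod.cast_id]; exact ha1
    -- τ has exactly one fixed point
    have hfix1 : (Finset.univ.filter fun x => τ x = x).card = 1 :=
      aux_one_fixed hp hσ hσcard hconj haval1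
    obtain ⟨x₀, hx₀⟩ := Finset.card_eq_one.mp hfix1
    have hx₀fix : τ x₀ = x₀ := by
      have : x₀ ∈ Finset.univ.filter fun x => τ x = x := by
        rw [hx₀]; exact Finset.mem_singleton_self x₀
      simpa using this
    have hx₀pow : ∀ m : ℕ, (τ ^ m) x₀ = x₀ := by
      intro m
      induction m with
      | zero => rfl
      | succ m ih => rw [pow_succ, Equiv.Perm.mul_apply, hx₀fix, ih]
    -- τ ^ d = 1
    have hτd : τ ^ d = 1 := by
      have h1 : τ ^ d * σ * (τ ^ d)⁻¹ = σ := by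
        have had : a ^ d = 1 := pow_orderOf_eq_one a
        rw [hconjk d, had, ZMod.val_one, pow_one]
      have hcomm : τ ^ d * σ = σ * τ ^ d := by
        calc τ ^ d * σ = τ ^ d * σ * (τ ^ d)⁻¹ * τ ^ d := by group
          _ = σ * τ ^ d := by rw [h1]
      obtain ⟨c, hc⟩ := aux_commute hp hσ hσcard hcomm
      have : (σ ^ c) x₀ = (σ ^ 0) x₀ := by
        rw [pow_zero, ← hc, hx₀pow]
        rfl
      have hc0 : (c : ZMod p) = ((0 : ℕ) : ZMod p) :=
        (aux_pow_apply_eq hp hσ hσcard x₀).mp this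
      rw [hc, hpow_eq c 0 hc0, pow_zero]
    have hτorder : orderOf τ ∣ d := orderOf_dvd_of_pow_eq_one hτd
    -- every cycle has length d
    have hall : ∀ ℓ ∈ τ.cycleType, ℓ = d := by
      intro ℓ hℓ
      have hℓd : ℓ ∣ d := dvd_trans (by
        rw [← Equiv.Perm.lcm_cycleType]; exact Multiset.dvd_lcm hℓ) hτorder
      by_contra hne
      have hℓlt : ℓ < d := lt_of_le_of_ne (Nat.le_of_dvd hd_pos hℓd) hne
      have hℓ2 : 2 ≤ ℓ := Equiv.Perm.two_le_of_mem_cycleType hℓ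
      -- τ ^ ℓ has exactly one fixed point
      have hndvd : ¬ (d ∣ ℓ) := fun h => by
        have := Nat.le_of_dvd (by omega) h
        omega
      have haℓ : (((a ^ ℓ).val : ℕ) : ZMod p) ≠ 1 := by
        rw [ZMod.natCast_val, ZMod.cast_id]
        intro h
        exact hndvd (orderOf_dvd_iff_pow_eq_one.mpr h)
      have hfixℓ : (Finset.univ.filter fun x => (τ ^ ℓ) x = x).card = 1 :=
        aux_one_fixed hp hσ hσcard (hconjk ℓ) haℓ
      -- get a cycle of length ℓ
      rw [Equiv.Perm.cycleType_def, Multiset.mem_map] at hℓ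
      obtain ⟨c, hcmem, hccard⟩ := hℓ
      have hcmem' : c ∈ τ.cycleFactorsFinset := hcmem
      obtain ⟨hccyc, hcapp⟩ := Equiv.Perm.mem_cycleFactorsFinset_iff.mp hcmem'
      obtain ⟨y, hy⟩ : ∃ y, y ∈ c.support := by
        apply Finset.card_pos.mp
        simp only [Function.comp] at hccard
        omega
      have hcy : ∀ m : ℕ, (τ ^ m) y = (c ^ m) y := by
        intro m
        induction m with
        | zero => rfl
        | succ m ih =>
          rw [pow_succ', pow_succ', Equiv.Perm.mul_apply, Equiv.Perm.mul_apply, ih,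
            ← hcapp _ (Equiv.Perm.pow_apply_mem_support.mpr hy)]
      have hcord : c ^ ℓ = 1 := by
        have : orderOf c = ℓ := by
          rw [hccyc.orderOf]
          simpa using hccard
        rw [← this, pow_orderOf_eq_one]
      have hyfix : (τ ^ ℓ) y = y := by rw [hcy, hcord]; rfl
      have hyne : y ≠ x₀ := by
        intro h
        have : τ y = y := by rw [h, hx₀fix]
        rw [← hcapp _ hy] at this
        exact (Equiv.Perm.mem_support.mp hy) this
      have hsub : ({x₀, y} : Finset (Fin p)) ⊆
          Finset.univ.filter fun x => (τ ^ ℓ) x = x := by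
        intro z hz
        simp only [Finset.mem_insert, Finset.mem_singleton] at hz
        rcases hz with rfl | rfl
        · simp [hx₀pow ℓ]
        · simp [hyfix]
      have hcard2 : ({x₀, y} : Finset (Fin p)).card = 2 := by
        rw [Finset.card_insert_of_notMem (by simp [Ne.symm hyne]), Finset.card_singleton]
      have := Finset.card_le_card hsub
      omega
    -- conclude cycleType
    have hsuppcard : τ.support.card = p - 1 := by
      have := hfix_card τ
      omega
    have hsum : τ.cycleType.sum = p - 1 := by
      rw [Equiv.Perm.sum_cycleType, hsuppcard]
    have hrep : τ.cycleType = Multiset.replicate τ.cycleType.card d :=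
      Multiset.eq_replicate_card.mpr hall
    have hcardmul : τ.cycleType.card * d = p - 1 := by
      have h2 := hsum
      rw [hrep, Multiset.sum_replicate, smul_eq_mul] at h2
      exact h2
    have hcount : τ.cycleType.card = (p - 1) / d := by
      rw [← hcardmul, Nat.mul_div_cancel _ hd_pos]
    refine ⟨hτ1, ?_, ⟨d, hd_dvd, hd2, hfix1, by rw [hrep, hcount]⟩⟩
    rintro ⟨-, hsp⟩
    omega
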